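/- For a symmetric positive semidefinite matrix S with eigenvalues λ_1 ≥ ... ≥ λ_n and corresponding orthonormal eigenvectors w_1, ..., w_n, the subspace spanned by the first r eigenvectors maximizes the trace of W^T S W over all n×r matrices W with orthonormal columns, and the maximum equals λ_1 + ... + λ_r. -/

import Mathlib

open Matrix

lemma pca_sum_castLE {n r : ℕ} (hr : r ≤ n) (f : Fin n → ℝ) :
    ∑ i ∈ Finset.univ.filter (fun i : Fin n => i.val < r), f i
      = ∑ i : Fin r, f (Fin.castLE hr i) := by
  rw [show (∑ i : Fin r, f (Fin.castLE hr i))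
      = ∑ i ∈ Finset.univ.map (Fin.castLEEmb hr), f i by
    rw [Finset.sum_map]; rfl]
  congr 1
  ext i
  simp [Fin.castLEEmb, Fin.castLE, Fin.exists_iff, Fin.ext_iff]

lemma pca_key_ineq {n r : ℕ} (hr : r ≤ n) (lam c : Fin n → ℝ) (hsort : Antitone lam)
    (hlam : ∀ i, 0 ≤ lam i)
    (hc0 : ∀ i, 0 ≤ c i) (hc1 : ∀ i, c i ≤ 1) (hsum : ∑ i, c i = r) :
    ∑ i, lam i * c i ≤ ∑ i : Fin r, lam (Fin.castLE hr i) := by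
  rcases eq_or_lt_of_le hr with h | hlt
  · subst h
    have h1 : ∑ i : Fin r, lam (Fin.castLE hr i) = ∑ i, lam i :=
      Finset.sum_congr rfl (fun i _ => rfl)
    rw [h1]
    calc ∑ i, lam i * c i ≤ ∑ i, lam i * 1 :=
      Finset.sum_le_sum (fun i _ => mul_le_mul_of_nonneg_left (hc1 i) (hlam i))
    _ = ∑ i, lam i := by simp
  · set t := lam ⟨r, hlt⟩ with ht
    have key : ∑ i, (lam i - t) * c i ≤ ∑ i : Fin r, (lam (Fin.castLE hr i) - t) := by
      rw [← pca_sum_castLE hr (fun i => lam i - t)]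
      rw [← Finset.sum_filter_add_sum_filter_not Finset.univ (fun i : Fin n => i.val < r)
        (fun i => (lam i - t) * c i)]
      have h2 : ∑ i ∈ Finset.univ.filter (fun i : Fin n => ¬ i.val < r),
          (lam i - t) * c i ≤ 0 := by
        apply Finset.sum_nonpos
        intro i hi
        simp only [Finset.mem_filter] at hi
        have : lam i ≤ t := hsort (by simpa [Fin.le_def] using le_of_not_gt hi.2)
        exact mul_nonpos_of_nonpos_of_nonneg (by linarith) (hc0 i)
      have h3 : ∑ i ∈ Finset.univ.filter (fun i : Fin n => i.val < r),
          (lam i - t) * c i ≤ ∑ i ∈ Finset.univ.filter (fun i : Fin n => i.val < r),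
          (lam i - t) := by
        apply Finset.sum_le_sum
        intro i hi
        simp only [Finset.mem_filter] at hi
        have : t ≤ lam i := hsort (by simpa [Fin.le_def] using le_of_lt hi.2)
        nlinarith [hc0 i, hc1 i]
      linarith
    have e1 : ∑ i, lam i * c i = ∑ i, (lam i - t) * c i + t * (r : ℝ) := by
      rw [← hsum, Finset.mul_sum, ← Finset.sum_add_distrib]
      apply Finset.sum_congr rfl; intro i _; ring
    have e2 : ∑ i : Fin r, (lam (Fin.castLE hr i) - t)
        = ∑ i : Fin r, lam (Fin.castLE hr i) - t * (r : ℝ) := by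
      rw [Finset.sum_sub_distrib]
      simp [mul_comm]
    linarith

lemma pca_psd_diag_nonneg {m : ℕ} {A : Matrix (Fin m) (Fin m) ℝ} (hA : A.PosSemidef)
    (i : Fin m) : 0 ≤ A i i := by
  have h := hA.dotProduct_mulVec_nonneg (Pi.single i 1)
  simpa [Matrix.mulVec_single, dotProduct, Pi.single_apply, Finset.sum_ite_eq] using h

/-- PCA optimality: the top-`r` eigenvectors of a symmetric PSD matrix `S`
maximize `tr (Wᵀ S W)` over matrices with orthonormal columns, with maximum
`λ₁ + ⋯ + λ_r`. -/
theorem pca_trace_maximization {n r : ℕ} (hr : r ≤ n)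
    (S : Matrix (Fin n) (Fin n) ℝ) (hS : S.PosSemidef)
    (lam : Fin n → ℝ) (hsort : Antitone lam)
    (w : Fin n → (Fin n → ℝ))
    (heig : ∀ i, S.mulVec (w i) = lam i • w i)
    (horth : ∀ i j, dotProduct (w i) (w j) = if i = j then (1 : ℝ) else 0) :
    (∀ W : Matrix (Fin n) (Fin r) ℝ, Wᵀ * W = 1 →
        (Wᵀ * S * W).trace ≤ ∑ i : Fin r, lam (Fin.castLE hr i)) ∧
    (let W₀ : Matrix (Fin n) (Fin r) ℝ := fun i j => w (Fin.castLE hr j) i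
     W₀ᵀ * W₀ = 1 ∧ (W₀ᵀ * S * W₀).trace = ∑ i : Fin r, lam (Fin.castLE hr i)) := by
  have hlam : ∀ i, 0 ≤ lam i := by
    intro i
    have h := hS.dotProduct_mulVec_nonneg (w i)
    rw [heig i] at h
    simpa [dotProduct_smul, horth i i] using h
  constructor
  · intro W hW
    set P : Matrix (Fin n) (Fin n) ℝ := Matrix.of (fun i j => w i j) with hP
    have hPPT : P * Pᵀ = 1 := by
      ext i j
      simpa [Matrix.mul_apply, dotProduct, Matrix.one_apply, hP] using horth i j
    have hPTP : Pᵀ * P = 1 := mul_eq_one_comm.mp hPPT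
    have hSeq : S = Pᵀ * Matrix.diagonal lam * P := by
      have h1 : S * Pᵀ = Pᵀ * Matrix.diagonal lam := by
        ext i j
        have h0 := congrFun (heig j) i
        simp [Matrix.mulVec, dotProduct] at h0
        simp [Matrix.mul_apply, Matrix.diagonal, hP]
        rw [h0]; ring
      calc S = S * (Pᵀ * P) := by rw [hPTP, mul_one]
      _ = (S * Pᵀ) * P := by rw [mul_assoc]
      _ = Pᵀ * Matrix.diagonal lam * P := by rw [h1]
    set M : Matrix (Fin n) (Fin r) ℝ := P * W with hM
    set c : Fin n → ℝ := fun i => ∑ j, M i j * M i j with hc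
    have htr : (Wᵀ * S * W).trace = ∑ i, lam i * c i := by
      have h1 : Wᵀ * S * W = Mᵀ * Matrix.diagonal lam * M := by
        rw [hSeq, hM, transpose_mul]
        simp only [Matrix.mul_assoc]
      rw [h1]
      simp [Matrix.trace, Matrix.diag, Matrix.mul_apply, Matrix.diagonal,
        Finset.mul_sum, Finset.sum_mul]
      rw [Finset.sum_comm]
      apply Finset.sum_congr rfl
      intro i _
      simp [hc, Finset.mul_sum]
      apply Finset.sum_congr rfl
      intro j _
      ring
    have hMTM : Mᵀ * M = 1 := by
      rw [hM, transpose_mul, Matrix.mul_assoc, ← Matrix.mul_assoc Pᵀ P W, hPTP,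
        Matrix.one_mul, hW]
    have hcsum : ∑ i, c i = r := by
      have h2 : ∑ i, c i = (M * Mᵀ).trace := by
        simp [hc, Matrix.trace, Matrix.diag, Matrix.mul_apply]
      rw [h2, Matrix.trace_mul_comm, hMTM]
      simp [Matrix.trace]
    have hc0 : ∀ i, 0 ≤ c i := fun i => Finset.sum_nonneg fun j _ => mul_self_nonneg _
    have hc1 : ∀ i, c i ≤ 1 := by
      intro i
      set R : Matrix (Fin n) (Fin n) ℝ := 1 - W * Wᵀ with hR
      have hRT : Rᵀ = R := by
        rw [hR, transpose_sub, transpose_one, transpose_mul, transpose_transpose]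
      have hQQ : (W * Wᵀ) * (W * Wᵀ) = W * Wᵀ := by
        rw [Matrix.mul_assoc, ← Matrix.mul_assoc Wᵀ W Wᵀ, hW, Matrix.one_mul]
      have hRR : R * R = R := by
        rw [hR, Matrix.sub_mul, Matrix.mul_sub, Matrix.mul_sub, Matrix.one_mul,
          Matrix.mul_one, hQQ, Matrix.one_mul]
        abel
      have hpsd : (P * R * Pᵀ).PosSemidef := by
        have heq : P * R * Pᵀ = (R * Pᵀ)ᵀ * (R * Pᵀ) := by
          calc P * R * Pᵀ = P * (R * R) * Pᵀ := by rw [hRR]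
          _ = (P * R) * (R * Pᵀ) := by simp only [Matrix.mul_assoc]
          _ = (R * Pᵀ)ᵀ * (R * Pᵀ) := by rw [transpose_mul, transpose_transpose, hRT]
        rw [heq]
        exact Matrix.posSemidef_conjTranspose_mul_self _
      have hdiag := pca_psd_diag_nonneg hpsd i
      have hexp : P * R * Pᵀ = 1 - M * Mᵀ := by
        rw [hR, Matrix.mul_sub, Matrix.mul_one, Matrix.sub_mul, hPPT, hM, transpose_mul]
        simp only [Matrix.mul_assoc]
      rw [hexp] at hdiag
      have h3 : (M * Mᵀ) i i = c i := by simp [Matrix.mul_apply, hc]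
      simp only [Matrix.sub_apply, Matrix.one_apply_eq, h3] at hdiag
      linarith
    rw [htr]
    exact pca_key_ineq hr lam c hsort hlam hc0 hc1 hcsum
  · intro W₀
    constructor
    · ext i j
      have := horth (Fin.castLE hr i) (Fin.castLE hr j)
      rw [Matrix.mul_apply]
      simp only [Matrix.transpose_apply]
      simp [Matrix.mul_apply, W₀, dotProduct] at this ⊢
      rw [this]
      simp [Fin.castLE_inj, Matrix.one_apply]
    · have hcol : ∀ j : Fin r, ∀ k : Fin n,
          (S * W₀) k j = lam (Fin.castLE hr j) * w (Fin.castLE hr j) k := by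
        intro j k
        have h0 := congrFun (heig (Fin.castLE hr j)) k
        simp [Matrix.mulVec, dotProduct] at h0
        rw [Matrix.mul_apply]
        simpa [Matrix.mul_apply, W₀] using h0
      have : (W₀ᵀ * S * W₀).trace = ∑ j : Fin r, lam (Fin.castLE hr j) := by
        rw [Matrix.mul_assoc]
        simp only [Matrix.trace, Matrix.diag]
        apply Finset.sum_congr rfl
        intro j _
        rw [Matrix.mul_apply]
        simp only [transpose_apply]
        have : ∑ k, W₀ k j * (S * W₀) k j
            = lam (Fin.castLE hr j) * ∑ k, w (Fin.castLE hr j) k * w (Fin.castLE hr j) k := by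
          rw [Finset.mul_sum]
          apply Finset.sum_congr rfl
          intro k _
          rw [hcol j k]
          simp [W₀]
          ring
        rw [this]
        have h1 := horth (Fin.castLE hr j) (Fin.castLE hr j)
        simp [dotProduct] at h1
        rw [h1, mul_one]
      exact this
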